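/- For every s ∈ [0,1), each of the maps f̃₀, f̃₁, f̃₂ and the tetrahedral PET f̃_s commutes with the involution ι of the torus: for every i ∈ {0,1,2} and every p ∈ Δ̃ at which f̃_i is defined, f̃_i(ι(p)) = ι(f̃_i(p)), and consequently f̃_s(ι(p)) = ι(f̃_s(p)) at every point p where f̃_s is defined. -/

import Mathlib

open MeasureTheory
open scoped Classical

noncomputable section

/-- The lattice Λ ⊂ ℝ² generated by (2,0) and (1,−√3). -/
def TetLat : AddSubgroup (ℝ × ℝ) :=
  AddSubgroup.closure {((2 : ℝ), (0 : ℝ)), ((1 : ℝ), -Real.sqrt 3)}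

/-- The torus Δ̃ = ℝ²/Λ. -/
abbrev Torus := (ℝ × ℝ) ⧸ TetLat

/-- The quotient map ℝ² → Δ̃. -/
def tmk : ℝ × ℝ → Torus := QuotientAddGroup.mk

/-- The vertex sets of the four triangles A₀, A₁, A₂, A₃. -/
def triVerts : Fin 4 → Set (ℝ × ℝ)
  | 0 => {((-1 : ℝ), (0 : ℝ)), ((-1/2 : ℝ), Real.sqrt 3 / 2), ((0 : ℝ), (0 : ℝ))}
  | 1 => {((-1 : ℝ), (0 : ℝ)), ((-1/2 : ℝ), Real.sqrt 3 / 2), ((-3/2 : ℝ), Real.sqrt 3 / 2)}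
  | 2 => {((-1/2 : ℝ), Real.sqrt 3 / 2), ((0 : ℝ), (0 : ℝ)), ((1/2 : ℝ), Real.sqrt 3 / 2)}
  | 3 => {((-1 : ℝ), (0 : ℝ)), ((0 : ℝ), (0 : ℝ)), ((-1/2 : ℝ), -Real.sqrt 3 / 2)}

/-- The triangle A_α, as a subset of the torus Δ̃. -/
def TriA (α : Fin 4) : Set Torus := tmk '' (convexHull ℝ (triVerts α))

/-- The involution ι of Δ̃, induced by (x,y) ↦ (−x,−y). -/
def iot : Torus → Torus := fun p => -p

/-- The unit vectors ω₀, ω₁, ω₂ in the directions of the cube roots of unity. -/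
def om : Fin 3 → ℝ × ℝ
  | 0 => ((1 : ℝ), (0 : ℝ))
  | 1 => ((-1/2 : ℝ), Real.sqrt 3 / 2)
  | 2 => ((-1/2 : ℝ), -Real.sqrt 3 / 2)

/-- The index 3 − i. -/
def opp : Fin 3 → Fin 4
  | 0 => 3
  | 1 => 2
  | 2 => 1

/-- The open region where f̃ᵢ translates by +s·ωᵢ. -/
def PosReg (i : Fin 3) : Set Torus :=
  interior ((⋃ α ∈ {a : Fin 4 | a ≠ opp i}, TriA α) ∪ iot '' TriA (opp i))

/-- The open region where f̃ᵢ translates by −s·ωᵢ. -/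
def NegReg (i : Fin 3) : Set Torus :=
  interior (TriA (opp i) ∪ ⋃ α ∈ {a : Fin 4 | a ≠ opp i}, iot '' TriA α)

/-- The map f̃ᵢ (extended arbitrarily, by the −s·ωᵢ formula, off its domain of definition). -/
def fI (s : ℝ) (i : Fin 3) (p : Torus) : Torus :=
  if p ∈ PosReg i then p + tmk (s • om i) else p - tmk (s • om i)

/-- The set where f̃ᵢ is defined. -/
def fIDef (i : Fin 3) (p : Torus) : Prop := p ∈ PosReg i ∨ p ∈ NegReg i

/-- The tetrahedral PET f̃ₛ = f̃₂ ∘ f̃₁ ∘ f̃₀. -/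
def fS (s : ℝ) : Torus → Torus := fI s 2 ∘ fI s 1 ∘ fI s 0

/-- The set where f̃ₛ is defined. -/
def fSDef (s : ℝ) (p : Torus) : Prop :=
  fIDef 0 p ∧ fIDef 1 (fI s 0 p) ∧ fIDef 2 (fI s 1 (fI s 0 p))

/-! ### Auxiliary material -/

namespace Stmt13Aux

/-- A linear functional on the plane. -/
def lin (a b : ℝ) (p : ℝ × ℝ) : ℝ := a * p.1 + b * p.2

lemma lin_add (a b : ℝ) (x y : ℝ × ℝ) : lin a b (x + y) = lin a b x + lin a b y := by
  simp [lin]; ring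

lemma lin_neg (a b : ℝ) (x : ℝ × ℝ) : lin a b (-x) = -lin a b x := by
  simp [lin]; ring

lemma lin_isLinear (a b : ℝ) : IsLinearMap ℝ (lin a b) := by
  constructor
  · exact lin_add a b
  · intro c x; simp [lin, smul_eq_mul]; ring

lemma convex_band (a b r s : ℝ) :
    Convex ℝ {x : ℝ × ℝ | r ≤ lin a b x ∧ lin a b x ≤ s} := by
  have : {x : ℝ × ℝ | r ≤ lin a b x ∧ lin a b x ≤ s}
      = {x : ℝ × ℝ | r ≤ lin a b x} ∩ {x : ℝ × ℝ | lin a b x ≤ s} := rfl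
  rw [this]
  exact (convex_halfSpace_ge (lin_isLinear a b) r).inter (convex_halfSpace_le (lin_isLinear a b) s)

lemma hull_band {a b r s : ℝ} {V : Set (ℝ × ℝ)}
    (hv : ∀ v ∈ V, r ≤ lin a b v ∧ lin a b v ≤ s) :
    ∀ x ∈ convexHull ℝ V, r ≤ lin a b x ∧ lin a b x ≤ s :=
  fun _x hx => convexHull_min hv (convex_band a b r s) hx

lemma neg_hull_band {a b r s : ℝ} {V : Set (ℝ × ℝ)}
    (hv : ∀ v ∈ V, r ≤ lin a b v ∧ lin a b v ≤ s) :
    ∀ x : ℝ × ℝ, -x ∈ convexHull ℝ V → -s ≤ lin a b x ∧ lin a b x ≤ -r := by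
  intro x hx
  have h := hull_band hv (-x) hx
  have e : lin a b x = -lin a b (-x) := by rw [lin_neg, neg_neg]
  exact ⟨by rw [e]; linarith [h.2], by rw [e]; linarith [h.1]⟩

lemma lat_lin {a b h : ℝ} (k1 k2 : ℤ)
    (h1 : lin a b (2, 0) = 2 * k1 * h)
    (h2 : lin a b (1, -Real.sqrt 3) = 2 * k2 * h) :
    ∀ l ∈ TetLat, ∃ k : ℤ, lin a b l = 2 * k * h := by
  intro l hl
  induction hl using AddSubgroup.closure_induction with
  | mem x hx =>
      rcases hx with rfl | rfl
      · exact ⟨k1, h1⟩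
      · exact ⟨k2, h2⟩
  | zero => exact ⟨0, by simp [lin]⟩
  | add x y _ _ ihx ihy =>
      obtain ⟨kx, ex⟩ := ihx
      obtain ⟨ky, ey⟩ := ihy
      exact ⟨kx + ky, by rw [lin_add, ex, ey]; push_cast; ring⟩
  | neg x _ ihx =>
      obtain ⟨kx, ex⟩ := ihx
      exact ⟨-kx, by rw [lin_neg, ex]; push_cast; ring⟩

lemma line_null (a b c : ℝ) (hb : b ≠ 0) :
    volume {p : ℝ × ℝ | lin a b p = c} = 0 := by
  have hcont : Continuous (lin a b) := by
    unfold lin; fun_prop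
  have hmeas : MeasurableSet {p : ℝ × ℝ | lin a b p = c} :=
    (isClosed_eq hcont continuous_const).measurableSet
  rw [show (volume : Measure (ℝ × ℝ)) = (volume : Measure ℝ).prod volume from rfl,
    Measure.prod_apply hmeas]
  have hz : ∀ x : ℝ, volume (Prod.mk x ⁻¹' {p : ℝ × ℝ | lin a b p = c}) = 0 := by
    intro x
    refine measure_mono_null (t := {(c - a * x) / b}) ?_ (measure_singleton _)
    intro y hy
    simp only [Set.mem_preimage, Set.mem_setOf_eq, lin] at hy
    simp only [Set.mem_singleton_iff]
    field_simp
    linarith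
  calc (∫⁻ x : ℝ, volume (Prod.mk x ⁻¹' {p : ℝ × ℝ | lin a b p = c}))
      = ∫⁻ _x : ℝ, (0 : ENNReal) := lintegral_congr hz
    _ = 0 := lintegral_zero

lemma multiples_null (a b h : ℝ) (hb : b ≠ 0) :
    volume {x : ℝ × ℝ | ∃ m : ℤ, lin a b x = m * h} = 0 := by
  have he : {x : ℝ × ℝ | ∃ m : ℤ, lin a b x = m * h}
      = ⋃ m : ℤ, {x : ℝ × ℝ | lin a b x = m * h} := by
    ext x; simp
  rw [he]
  exact measure_iUnion_null fun m => line_null a b (m * h) hb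

lemma tmk_continuous : Continuous tmk := continuous_quotient_mk'

lemma tmk_surjective : Function.Surjective tmk := QuotientAddGroup.mk_surjective

lemma tmk_hom : tmk = ⇑(QuotientAddGroup.mk' TetLat) := rfl

lemma tmk_neg_set (s : Set (ℝ × ℝ)) : tmk '' (-s) = -(tmk '' s) := by
  rw [tmk_hom, Set.image_neg]

/-- The key disjointness lemma. -/
lemma disj_main (a b h : ℝ) (hb : b ≠ 0) (hh : 0 < h) (A : Set (ℝ × ℝ))
    (hA : ∀ x ∈ A, ∃ k : ℤ, 2 * k * h ≤ lin a b x ∧ lin a b x ≤ 2 * k * h + h)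
    (hL : ∀ l ∈ TetLat, ∃ k : ℤ, lin a b l = 2 * k * h) :
    interior (tmk '' A) ∩ interior (tmk '' (-A)) = ∅ := by
  by_contra hne
  rw [← Ne, ← Set.nonempty_iff_ne_empty] at hne
  set W := interior (tmk '' A) ∩ interior (tmk '' (-A)) with hW
  have hWopen : IsOpen W := isOpen_interior.inter isOpen_interior
  have hpre_open : IsOpen (tmk ⁻¹' W) := hWopen.preimage tmk_continuous
  have hpre_ne : (tmk ⁻¹' W).Nonempty := by
    obtain ⟨p, hp⟩ := hne
    obtain ⟨x, rfl⟩ := tmk_surjective p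
    exact ⟨x, hp⟩
  have hsub : tmk ⁻¹' W ⊆ {x : ℝ × ℝ | ∃ m : ℤ, lin a b x = m * h} := by
    intro x hx
    obtain ⟨hx1, hx2⟩ := hx
    obtain ⟨y, hyA, hy⟩ := interior_subset hx1
    obtain ⟨z, hzA, hz⟩ := interior_subset hx2
    have hyx : -y + x ∈ TetLat := (QuotientAddGroup.eq).mp hy
    have hzx : -z + x ∈ TetLat := (QuotientAddGroup.eq).mp hz
    obtain ⟨k, hk1, hk2⟩ := hA y hyA
    obtain ⟨j, hj1, hj2⟩ := hA (-z) (Set.mem_neg.mp hzA)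
    obtain ⟨k', hk'⟩ := hL _ hyx
    obtain ⟨j', hj'⟩ := hL _ hzx
    have ey : lin a b x = lin a b y + 2 * k' * h := by
      have hxy : x = y + (-y + x) := by abel
      rw [hxy, lin_add, hk']
    have ez : lin a b x = -lin a b (-z) + 2 * j' * h := by
      have hxz : x = z + (-z + x) := by abel
      rw [hxz, lin_add, hj', ← lin_neg, neg_neg]
    by_cases hc : (j' - j : ℤ) ≤ k + k'
    · refine ⟨2 * (k + k'), ?_⟩
      have c1 : ((j' - j : ℤ) : ℝ) ≤ ((k + k' : ℤ) : ℝ) := by exact_mod_cast hc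
      push_cast at c1 ⊢
      nlinarith [mul_le_mul_of_nonneg_right c1 hh.le]
    · refine ⟨2 * (k + k') + 1, ?_⟩
      have hc' : (k + k' + 1 : ℤ) ≤ j' - j := by omega
      have c1 : ((k + k' + 1 : ℤ) : ℝ) ≤ ((j' - j : ℤ) : ℝ) := by exact_mod_cast hc'
      push_cast at c1 ⊢
      nlinarith [mul_le_mul_of_nonneg_right c1 hh.le]
  have h0 : volume (tmk ⁻¹' W) = 0 :=
    measure_mono_null hsub (multiples_null a b h hb)
  exact absurd h0 (ne_of_gt (hpre_open.measure_pos volume hpre_ne))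

/-! ### Identification of the regions -/

def USet (i : Fin 3) : Set (ℝ × ℝ) :=
  (⋃ α ∈ {a : Fin 4 | a ≠ opp i}, convexHull ℝ (triVerts α)) ∪
    (-(convexHull ℝ (triVerts (opp i))))

lemma iot_image (S : Set Torus) : iot '' S = -S := by
  ext p
  constructor
  · rintro ⟨q, hq, rfl⟩
    simpa [iot, Set.mem_neg] using hq
  · intro hp
    exact ⟨-p, Set.mem_neg.mp hp, by simp [iot]⟩

lemma iot_iot_image (S : Set Torus) : iot '' (iot '' S) = S := by
  rw [Set.image_image]
  simp [iot]

lemma posSet_eq (i : Fin 3) :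
    ((⋃ α ∈ {a : Fin 4 | a ≠ opp i}, TriA α) ∪ iot '' TriA (opp i)) = tmk '' USet i := by
  rw [USet, Set.image_union]
  congr 1
  · simp [TriA, Set.image_iUnion]
  · rw [tmk_neg_set, iot_image, TriA]

lemma negSet_eq (i : Fin 3) :
    (TriA (opp i) ∪ ⋃ α ∈ {a : Fin 4 | a ≠ opp i}, iot '' TriA α)
      = iot '' ((⋃ α ∈ {a : Fin 4 | a ≠ opp i}, TriA α) ∪ iot '' TriA (opp i)) := by
  rw [Set.image_union, iot_iot_image, Set.union_comm]
  congr 1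
  simp [Set.image_iUnion]

lemma pos_eq (i : Fin 3) : PosReg i = interior (tmk '' USet i) := by
  rw [PosReg, posSet_eq]

lemma neg_eq (i : Fin 3) : NegReg i = interior (tmk '' (-USet i)) := by
  rw [NegReg, negSet_eq, iot_image, posSet_eq, ← tmk_neg_set]

lemma interior_neg' (s : Set Torus) : interior (-s) = -interior s := by
  have h := (Homeomorph.neg Torus).preimage_interior s
  have e : ⇑(Homeomorph.neg Torus) = fun p : Torus => -p := rfl
  rw [e] at h
  rw [show (fun p : Torus => -p) ⁻¹' interior s = -interior s from Set.neg_preimage,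
      show (fun p : Torus => -p) ⁻¹' s = -s from Set.neg_preimage] at h
  exact h.symm

lemma iot_mem_pos (i : Fin 3) (p : Torus) : iot p ∈ PosReg i ↔ p ∈ NegReg i := by
  rw [pos_eq, neg_eq, tmk_neg_set, interior_neg']
  show -p ∈ interior (tmk '' USet i) ↔ p ∈ -interior (tmk '' USet i)
  exact Set.mem_neg.symm

/-! ### Band checks -/

lemma sqrt3_nonneg : (0 : ℝ) ≤ Real.sqrt 3 := Real.sqrt_nonneg 3

lemma bandA0 : ∀ x ∈ USet 0, ∃ k : ℤ,
    2 * k * (Real.sqrt 3 / 2) ≤ lin 0 1 x ∧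
      lin 0 1 x ≤ 2 * k * (Real.sqrt 3 / 2) + Real.sqrt 3 / 2 := by
  have h3 := sqrt3_nonneg
  have t0 : ∀ v ∈ triVerts 0, (0 : ℝ) ≤ lin 0 1 v ∧ lin 0 1 v ≤ Real.sqrt 3 / 2 := by
    intro v hv
    rcases hv with rfl | rfl | rfl <;> refine ⟨?_, ?_⟩ <;> simp [lin] <;> linarith
  have t1 : ∀ v ∈ triVerts 1, (0 : ℝ) ≤ lin 0 1 v ∧ lin 0 1 v ≤ Real.sqrt 3 / 2 := by
    intro v hv
    rcases hv with rfl | rfl | rfl <;> refine ⟨?_, ?_⟩ <;> simp [lin] <;> linarith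
  have t2 : ∀ v ∈ triVerts 2, (0 : ℝ) ≤ lin 0 1 v ∧ lin 0 1 v ≤ Real.sqrt 3 / 2 := by
    intro v hv
    rcases hv with rfl | rfl | rfl <;> refine ⟨?_, ?_⟩ <;> simp [lin] <;> linarith
  have t3 : ∀ v ∈ triVerts 3, (-(Real.sqrt 3 / 2) : ℝ) ≤ lin 0 1 v ∧ lin 0 1 v ≤ 0 := by
    intro v hv
    rcases hv with rfl | rfl | rfl <;> refine ⟨?_, ?_⟩ <;> simp [lin] <;> linarith
  rintro x (hx | hx)
  · obtain ⟨α, hα, hx⟩ := Set.mem_iUnion₂.mp hx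
    refine ⟨0, ?_, ?_⟩ <;> push_cast <;> fin_cases α
    · linarith [(hull_band t0 x hx).1]
    · linarith [(hull_band t1 x hx).1]
    · linarith [(hull_band t2 x hx).1]
    · exact absurd (by decide) hα
    · linarith [(hull_band t0 x hx).2]
    · linarith [(hull_band t1 x hx).2]
    · linarith [(hull_band t2 x hx).2]
    · exact absurd (by decide) hα
  · have hx' : -x ∈ convexHull ℝ (triVerts 3) := Set.mem_neg.mp hx
    have h := neg_hull_band t3 x hx'
    refine ⟨0, ?_, ?_⟩ <;> push_cast <;>
      [linarith [h.1]; linarith [h.2]]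

lemma bandA1 : ∀ x : ℝ × ℝ, x ∈ -USet 1 → ∃ k : ℤ,
    2 * k * Real.sqrt 3 ≤ lin (Real.sqrt 3) 1 x ∧
      lin (Real.sqrt 3) 1 x ≤ 2 * k * Real.sqrt 3 + Real.sqrt 3 := by
  have h3 := sqrt3_nonneg
  have t0 : ∀ v ∈ triVerts 0, (-Real.sqrt 3 : ℝ) ≤ lin (Real.sqrt 3) 1 v ∧ lin (Real.sqrt 3) 1 v ≤ 0 := by
    intro v hv
    rcases hv with rfl | rfl | rfl <;> refine ⟨?_, ?_⟩ <;> simp [lin] <;> linarith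
  have t1 : ∀ v ∈ triVerts 1, (-Real.sqrt 3 : ℝ) ≤ lin (Real.sqrt 3) 1 v ∧ lin (Real.sqrt 3) 1 v ≤ 0 := by
    intro v hv
    rcases hv with rfl | rfl | rfl <;> refine ⟨?_, ?_⟩ <;> simp [lin] <;> linarith
  have t3 : ∀ v ∈ triVerts 3, (-Real.sqrt 3 : ℝ) ≤ lin (Real.sqrt 3) 1 v ∧ lin (Real.sqrt 3) 1 v ≤ 0 := by
    intro v hv
    rcases hv with rfl | rfl | rfl <;> refine ⟨?_, ?_⟩ <;> simp [lin] <;> linarith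
  have t2 : ∀ v ∈ triVerts 2, (0 : ℝ) ≤ lin (Real.sqrt 3) 1 v ∧ lin (Real.sqrt 3) 1 v ≤ Real.sqrt 3 := by
    intro v hv
    rcases hv with rfl | rfl | rfl <;> refine ⟨?_, ?_⟩ <;> simp [lin] <;> linarith
  intro x hx
  have hx' : -x ∈ USet 1 := Set.mem_neg.mp hx
  rcases hx' with hx' | hx'
  · obtain ⟨α, hα, hx'⟩ := Set.mem_iUnion₂.mp hx'
    refine ⟨0, ?_, ?_⟩ <;> push_cast <;> fin_cases α
    · linarith [(neg_hull_band t0 x hx').1]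
    · linarith [(neg_hull_band t1 x hx').1]
    · exact absurd (by decide) hα
    · linarith [(neg_hull_band t3 x hx').1]
    · linarith [(neg_hull_band t0 x hx').2]
    · linarith [(neg_hull_band t1 x hx').2]
    · exact absurd (by decide) hα
    · linarith [(neg_hull_band t3 x hx').2]
  · have hx'' : x ∈ convexHull ℝ (triVerts 2) := by
      have := Set.mem_neg.mp hx'
      rwa [neg_neg] at this
    have h := hull_band t2 x hx''
    refine ⟨0, ?_, ?_⟩ <;> push_cast <;>
      [linarith [h.1]; linarith [h.2]]

lemma bandA2 : ∀ x : ℝ × ℝ, x ∈ -USet 2 → ∃ k : ℤ,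
    2 * k * Real.sqrt 3 ≤ lin (Real.sqrt 3) (-1) x ∧
      lin (Real.sqrt 3) (-1) x ≤ 2 * k * Real.sqrt 3 + Real.sqrt 3 := by
  have h3 := sqrt3_nonneg
  have t0 : ∀ v ∈ triVerts 0, (-Real.sqrt 3 : ℝ) ≤ lin (Real.sqrt 3) (-1) v ∧ lin (Real.sqrt 3) (-1) v ≤ 0 := by
    intro v hv
    rcases hv with rfl | rfl | rfl <;> refine ⟨?_, ?_⟩ <;> simp [lin] <;> linarith
  have t2 : ∀ v ∈ triVerts 2, (-Real.sqrt 3 : ℝ) ≤ lin (Real.sqrt 3) (-1) v ∧ lin (Real.sqrt 3) (-1) v ≤ 0 := by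
    intro v hv
    rcases hv with rfl | rfl | rfl <;> refine ⟨?_, ?_⟩ <;> simp [lin] <;> linarith
  have t3 : ∀ v ∈ triVerts 3, (-Real.sqrt 3 : ℝ) ≤ lin (Real.sqrt 3) (-1) v ∧ lin (Real.sqrt 3) (-1) v ≤ 0 := by
    intro v hv
    rcases hv with rfl | rfl | rfl <;> refine ⟨?_, ?_⟩ <;> simp [lin] <;> linarith
  have t1 : ∀ v ∈ triVerts 1, (-(2 * Real.sqrt 3) : ℝ) ≤ lin (Real.sqrt 3) (-1) v ∧
      lin (Real.sqrt 3) (-1) v ≤ -Real.sqrt 3 := by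
    intro v hv
    rcases hv with rfl | rfl | rfl <;> refine ⟨?_, ?_⟩ <;> simp [lin] <;> linarith
  intro x hx
  have hx' : -x ∈ USet 2 := Set.mem_neg.mp hx
  rcases hx' with hx' | hx'
  · obtain ⟨α, hα, hx'⟩ := Set.mem_iUnion₂.mp hx'
    refine ⟨0, ?_, ?_⟩ <;> push_cast <;> fin_cases α
    · linarith [(neg_hull_band t0 x hx').1]
    · exact absurd (by decide) hα
    · linarith [(neg_hull_band t2 x hx').1]
    · linarith [(neg_hull_band t3 x hx').1]
    · linarith [(neg_hull_band t0 x hx').2]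
    · exact absurd (by decide) hα
    · linarith [(neg_hull_band t2 x hx').2]
    · linarith [(neg_hull_band t3 x hx').2]
  · have hx'' : x ∈ convexHull ℝ (triVerts 1) := by
      have := Set.mem_neg.mp hx'
      rwa [neg_neg] at this
    have h := hull_band t1 x hx''
    refine ⟨-1, ?_, ?_⟩ <;> push_cast <;> [linarith [h.1]; linarith [h.2]]

lemma disj_i (i : Fin 3) : PosReg i ∩ NegReg i = ∅ := by
  have h3 : (0 : ℝ) < Real.sqrt 3 := Real.sqrt_pos.mpr (by norm_num)
  fin_cases i
  · rw [pos_eq, neg_eq]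
    exact disj_main 0 1 (Real.sqrt 3 / 2) one_ne_zero (by positivity) (USet 0) bandA0
      (lat_lin 0 (-1) (by simp [lin]) (by simp [lin]; push_cast; ring))
  · rw [pos_eq, neg_eq]
    have h := disj_main (Real.sqrt 3) 1 (Real.sqrt 3) one_ne_zero h3 (-USet 1) bandA1
      (lat_lin 1 0 (by simp [lin]; push_cast; ring) (by simp [lin]))
    rw [neg_neg] at h
    rw [Set.inter_comm]
    exact h
  · rw [pos_eq, neg_eq]
    have h := disj_main (Real.sqrt 3) (-1) (Real.sqrt 3) (by norm_num) h3 (-USet 2) bandA2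
      (lat_lin 1 1 (by simp [lin]; push_cast; ring) (by simp [lin]; push_cast; ring))
    rw [neg_neg] at h
    rw [Set.inter_comm]
    exact h

end Stmt13Aux

open Stmt13Aux in
/-- For every s ∈ [0,1), each of the maps f̃₀, f̃₁, f̃₂ commutes with
the involution ι : p ↦ −p of the torus wherever defined, and consequently so does the
tetrahedral PET f̃ₛ. -/
theorem stmt_13 (s : ℝ) (hs : s ∈ Set.Ico (0 : ℝ) 1) :
    (∀ i : Fin 3, ∀ p : Torus, fIDef i p → fI s i (iot p) = iot (fI s i p)) ∧
    (∀ p : Torus, fSDef s p → fS s (iot p) = iot (fS s p)) := by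
  have key : ∀ i : Fin 3, ∀ p : Torus, fIDef i p → fI s i (iot p) = iot (fI s i p) := by
    intro i p hdef
    have hdisj : ∀ q : Torus, q ∈ PosReg i → q ∈ NegReg i → False := by
      intro q h1 h2
      have h := disj_i i
      exact Set.notMem_empty q (h ▸ (⟨h1, h2⟩ : q ∈ PosReg i ∩ NegReg i))
    rcases hdef with hp | hp
    · have h1 : iot p ∉ PosReg i := fun h => hdisj p hp ((iot_mem_pos i p).mp h)
      simp only [fI]
      rw [if_pos hp, if_neg h1]
      show iot p - tmk (s • om i) = iot (p + tmk (s • om i))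
      simp only [iot]
      abel
    · by_cases hq : p ∈ PosReg i
      · have h1 : iot p ∉ PosReg i := fun h => hdisj p hq ((iot_mem_pos i p).mp h)
        simp only [fI]
        rw [if_pos hq, if_neg h1]
        show iot p - tmk (s • om i) = iot (p + tmk (s • om i))
        simp only [iot]
        abel
      · have h1 : iot p ∈ PosReg i := (iot_mem_pos i p).mpr hp
        simp only [fI]
        rw [if_pos h1, if_neg hq]
        show iot p + tmk (s • om i) = iot (p - tmk (s • om i))
        simp only [iot]
        abel
  refine ⟨key, ?_⟩
  rintro p ⟨h0, h1, h2⟩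
  simp only [fS, Function.comp_apply]
  rw [key 0 p h0, key 1 _ h1, key 2 _ h2]

end
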